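/- arXiv:1805.06518 — 4 statements merged into one kernel-verified Lean document; each statement's English description precedes it below -/
import Mathlib

section
/- Let $0<\kappa<1$ and let $\mu$ be a finite Borel measure on $(0,\infty)$ with compact support bounded away from $0$. Define $V_o(\alpha) = (1+\kappa)\int_0^{\alpha} t \left(\int_{(t,\infty)} \frac{1}{\sqrt{y^2 - (1-\kappa^2)t^2}}\, d\mu(y)\right) dt$. Then $V_o(\alpha) = \int_{(0,\alpha]} y\, d\mu(y) + \frac{1}{1-\kappa}\int_{(\alpha,\infty)} \left(y - \sqrt{y^2 - (1-\kappa^2)\alpha^2}\right) d\mu(y)$ for every $\alpha>0$. -/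
open MeasureTheory intervalIntegral Set

lemma inner_ftc (c y β : ℝ) (hc0 : 0 < c) (hc1 : c < 1) (hy : 0 < y)
    (hβ0 : 0 ≤ β) (hβy : β ≤ y) :
    ∫ t in (0:ℝ)..β, t * (1 / Real.sqrt (y ^ 2 - c * t ^ 2)) =
      (y - Real.sqrt (y ^ 2 - c * β ^ 2)) / c := by
  have key : ∀ t ∈ Set.uIcc (0:ℝ) β, 0 < y ^ 2 - c * t ^ 2 := by
    intro t ht
    rw [Set.uIcc_of_le hβ0] at ht
    have h1 : t ^ 2 ≤ y ^ 2 := by nlinarith [ht.1, ht.2]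
    have h2 : c * t ^ 2 ≤ c * y ^ 2 := by nlinarith
    have h3 : c * y ^ 2 < y ^ 2 := by nlinarith [sq_nonneg y, mul_pos hy hy]
    nlinarith
  have hderiv : ∀ t ∈ Set.uIcc (0:ℝ) β,
      HasDerivAt (fun t => -(1/c) * Real.sqrt (y ^ 2 - c * t ^ 2))
        (t * (1 / Real.sqrt (y ^ 2 - c * t ^ 2))) t := by
    intro t ht
    have hpt := key t ht
    have hs0 : Real.sqrt (y ^ 2 - c * t ^ 2) ≠ 0 := by positivity
    have h1 : HasDerivAt (fun t : ℝ => y ^ 2 - c * t ^ 2) (-(c * (2 * t))) t := by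
      have := ((hasDerivAt_pow 2 t).const_mul c).const_sub (y ^ 2)
      simpa using this
    have h2 := (h1.sqrt (ne_of_gt hpt)).const_mul (-(1/c))
    refine h2.congr_deriv ?_
    have hsq : Real.sqrt (y ^ 2 - c * t ^ 2) > 0 := Real.sqrt_pos.2 hpt
    field_simp
  have hcont : ContinuousOn (fun t => t * (1 / Real.sqrt (y ^ 2 - c * t ^ 2)))
      (Set.uIcc (0:ℝ) β) := by
    apply ContinuousOn.mul continuousOn_id
    apply ContinuousOn.div continuousOn_const
    · exact (Real.continuous_sqrt.comp (by continuity)).continuousOn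
    · intro t ht
      have := key t ht
      positivity
  rw [intervalIntegral.integral_eq_sub_of_hasDerivAt hderiv
    (hcont.intervalIntegrable)]
  have h0 : Real.sqrt (y ^ 2 - c * 0 ^ 2) = y := by
    rw [show y ^ 2 - c * 0 ^ 2 = y ^ 2 by ring, Real.sqrt_sq hy.le]
  rw [h0]
  field_simp
  ring

theorem Vo_formula
    (κ : ℝ) (hκ : 0 < κ) (hκ1 : κ < 1)
    (μ : Measure ℝ) [IsFiniteMeasure μ]
    (a b : ℝ) (ha : 0 < a) (hab : a ≤ b) (hsupp : μ (Icc a b)ᶜ = 0)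
    (Vo : ℝ → ℝ)
    (hVo : ∀ α, Vo α =
      (1 + κ) * ∫ t in (0:ℝ)..α, t *
        ∫ y in Ioi t, (1 / Real.sqrt (y ^ 2 - (1 - κ ^ 2) * t ^ 2)) ∂μ) :
    ∀ α > 0, Vo α =
      (∫ y in Ioc (0:ℝ) α, y ∂μ) +
      (1 / (1 - κ)) *
        ∫ y in Ioi α, (y - Real.sqrt (y ^ 2 - (1 - κ ^ 2) * α ^ 2)) ∂μ := by
  intro α hα
  have hκ1' : (0:ℝ) < 1 - κ := by linarith
  have hκ1'' : (0:ℝ) < 1 + κ := by linarith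
  have hc0 : (0:ℝ) < 1 - κ ^ 2 := by nlinarith
  have hc1 : (1:ℝ) - κ ^ 2 < 1 := by nlinarith
  set F : ℝ × ℝ → ℝ := fun p =>
    if p.1 < p.2 then p.1 * (1 / Real.sqrt (p.2 ^ 2 - (1 - κ ^ 2) * p.1 ^ 2)) else 0
    with hF
  have hFmeas : Measurable F := by
    apply Measurable.ite (measurableSet_lt measurable_fst measurable_snd)
    · fun_prop
    · exact measurable_const
  haveI : IsFiniteMeasure (volume.restrict (Ioc (0:ℝ) α)) := by
    constructor
    rw [Measure.restrict_apply_univ]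
    simp [Real.volume_Ioc]
  -- integrability on the product
  have haefst : ∀ᵐ p ∂((volume.restrict (Ioc (0:ℝ) α)).prod μ), p.1 ∈ Ioc (0:ℝ) α := by
    rw [ae_iff]
    have hset : {p : ℝ × ℝ | ¬ p.1 ∈ Ioc (0:ℝ) α} = (Ioc (0:ℝ) α)ᶜ ×ˢ (univ : Set ℝ) := by
      ext p; simp [Set.mem_prod]
    rw [hset, Measure.prod_prod, Measure.restrict_apply measurableSet_Ioc.compl]
    simp
  have hbound : ∀ᵐ p ∂((volume.restrict (Ioc (0:ℝ) α)).prod μ), ‖F p‖ ≤ 1 / κ := by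
    filter_upwards [haefst] with p hp
    obtain ⟨t, y⟩ := p
    obtain ⟨ht0, htα⟩ := hp
    by_cases hty : t < y
    · have hpos : κ ^ 2 * t ^ 2 ≤ y ^ 2 - (1 - κ ^ 2) * t ^ 2 := by nlinarith
      have hs : κ * t ≤ Real.sqrt (y ^ 2 - (1 - κ ^ 2) * t ^ 2) := by
        have := Real.sqrt_le_sqrt hpos
        rwa [show κ ^ 2 * t ^ 2 = (κ * t) ^ 2 by ring,
          Real.sqrt_sq (by positivity)] at this
      have hs0 : 0 < Real.sqrt (y ^ 2 - (1 - κ ^ 2) * t ^ 2) := by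
        calc (0:ℝ) < κ * t := by positivity
        _ ≤ _ := hs
      have hval : F (t, y) = t / Real.sqrt (y ^ 2 - (1 - κ ^ 2) * t ^ 2) := by
        simp only [hF, if_pos hty]; ring
      rw [hval, Real.norm_eq_abs, abs_of_nonneg (by positivity)]
      rw [div_le_div_iff₀ hs0 hκ]
      nlinarith [hs]
    · have hval : F (t, y) = 0 := by simp only [hF, if_neg hty]
      rw [hval]; simp; positivity
  have hFint : Integrable F ((volume.restrict (Ioc (0:ℝ) α)).prod μ) :=
    (integrable_const (1/κ)).mono' hFmeas.aestronglyMeasurable hbound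
  -- rewrite LHS as iterated integral of F
  have step1 : Vo α = (1 + κ) * ∫ t in Ioc (0:ℝ) α, (∫ y, F (t, y) ∂μ) := by
    rw [hVo α, intervalIntegral.integral_of_le hα.le]
    congr 1
    apply setIntegral_congr_fun measurableSet_Ioc
    intro t ht
    dsimp only
    have : (fun y => F (t, y)) =
        (Ioi t).indicator (fun y => t * (1 / Real.sqrt (y ^ 2 - (1 - κ ^ 2) * t ^ 2))) := by
      funext y
      simp [hF, Set.indicator_apply, Set.mem_Ioi]
    rw [this, MeasureTheory.integral_indicator measurableSet_Ioi, MeasureTheory.integral_const_mul]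
  -- Fubini
  have step2 : ∫ t in Ioc (0:ℝ) α, (∫ y, F (t, y) ∂μ) =
      ∫ y, (∫ t in Ioc (0:ℝ) α, F (t, y)) ∂μ := by
    exact integral_integral_swap hFint
  -- pointwise evaluation in y
  have step3 : ∀ y : ℝ, (1 + κ) * ∫ t in Ioc (0:ℝ) α, F (t, y) =
      (Ioc (0:ℝ) α).indicator (fun y => y) y +
      (1 / (1 - κ)) * (Ioi α).indicator
        (fun y => y - Real.sqrt (y ^ 2 - (1 - κ ^ 2) * α ^ 2)) y := by
    intro y
    by_cases hy0 : 0 < y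
    · have hrw : (fun t => F (t, y)) =
          (Iio y).indicator (fun t => t * (1 / Real.sqrt (y ^ 2 - (1 - κ ^ 2) * t ^ 2))) := by
        funext t
        simp [hF, Set.indicator_apply, Set.mem_Iio]
      rw [hrw, MeasureTheory.integral_indicator measurableSet_Iio,
        Measure.restrict_restrict measurableSet_Iio]
      by_cases hyα : y ≤ α
      · have hset : Iio y ∩ Ioc (0:ℝ) α = Ioo 0 y := by
          ext x
          simp only [mem_inter_iff, mem_Iio, mem_Ioc, mem_Ioo]
          constructor
          · rintro ⟨h1, h2, h3⟩; exact ⟨h2, h1⟩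
          · rintro ⟨h1, h2⟩; exact ⟨h2, h1, by linarith⟩
        rw [hset, ← integral_Ioc_eq_integral_Ioo,
          ← intervalIntegral.integral_of_le hy0.le,
          inner_ftc (1 - κ ^ 2) y y hc0 hc1 hy0 hy0.le le_rfl]
        have hsq : Real.sqrt (y ^ 2 - (1 - κ ^ 2) * y ^ 2) = κ * y := by
          rw [show y ^ 2 - (1 - κ ^ 2) * y ^ 2 = (κ * y) ^ 2 by ring,
            Real.sqrt_sq (by positivity)]
        rw [hsq]
        rw [Set.indicator_of_mem (by exact ⟨hy0, hyα⟩),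
          Set.indicator_of_notMem (by simp [mem_Ioi]; linarith)]
        field_simp
        ring
      · push_neg at hyα
        have hset : Iio y ∩ Ioc (0:ℝ) α = Ioc 0 α := by
          ext x
          simp only [mem_inter_iff, mem_Iio, mem_Ioc]
          constructor
          · rintro ⟨h1, h2⟩; exact h2
          · rintro ⟨h1, h2⟩; exact ⟨by linarith, h1, h2⟩
        rw [hset, ← intervalIntegral.integral_of_le hα.le,
          inner_ftc (1 - κ ^ 2) y α hc0 hc1 hy0 hα.le (by linarith)]
        rw [Set.indicator_of_notMem (by simp [mem_Ioc]; intro h; linarith),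
          Set.indicator_of_mem (by exact hyα)]
        have hne : (1:ℝ) - κ ^ 2 ≠ 0 := ne_of_gt hc0
        field_simp
        ring
    · push_neg at hy0
      have hzero : ∀ t ∈ Ioc (0:ℝ) α, F (t, y) = 0 := by
        intro t ht
        have : ¬ t < y := by linarith [ht.1]
        simp [hF, this]
      rw [setIntegral_congr_fun measurableSet_Ioc hzero]
      rw [Set.indicator_of_notMem (by simp [mem_Ioc]; intro h; linarith),
        Set.indicator_of_notMem (by simp [mem_Ioi]; linarith)]
      simp
  -- integrability of the two indicator functions w.r.t. μ
  have hsupp_ae : ∀ᵐ y ∂μ, y ∈ Icc a b := by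
    rw [ae_iff]
    exact hsupp
  have hint1 : Integrable ((Ioc (0:ℝ) α).indicator (fun y => y)) μ := by
    apply (integrable_const α).mono'
      ((measurable_id'.indicator measurableSet_Ioc).aestronglyMeasurable)
    apply ae_of_all
    intro y
    rw [Real.norm_eq_abs]
    by_cases h : y ∈ Ioc (0:ℝ) α
    · rw [Set.indicator_of_mem h]
      rw [abs_of_pos h.1]; exact h.2
    · rw [Set.indicator_of_notMem h]; simp; linarith
  have hint2 : Integrable ((Ioi α).indicator
      (fun y => y - Real.sqrt (y ^ 2 - (1 - κ ^ 2) * α ^ 2))) μ := by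
    apply (integrable_const b).mono'
    · apply Measurable.aestronglyMeasurable
      apply Measurable.indicator _ measurableSet_Ioi
      fun_prop
    · filter_upwards [hsupp_ae] with y hy
      rw [Real.norm_eq_abs]
      by_cases h : y ∈ Ioi α
      · rw [Set.indicator_of_mem h]
        have hy0 : 0 < y := lt_trans hα h
        have hsle : Real.sqrt (y ^ 2 - (1 - κ ^ 2) * α ^ 2) ≤ y := by
          calc Real.sqrt (y ^ 2 - (1 - κ ^ 2) * α ^ 2) ≤ Real.sqrt (y ^ 2) :=
            Real.sqrt_le_sqrt (by nlinarith)
          _ = y := Real.sqrt_sq hy0.le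
        rw [abs_of_nonneg (by linarith)]
        have : Real.sqrt (y ^ 2 - (1 - κ ^ 2) * α ^ 2) ≥ 0 := Real.sqrt_nonneg _
        linarith [hy.2]
      · rw [Set.indicator_of_notMem h]; simp; linarith
  -- assemble
  rw [step1, step2, ← MeasureTheory.integral_const_mul]
  have : ∫ y, (1 + κ) * (∫ t in Ioc (0:ℝ) α, F (t, y)) ∂μ =
      ∫ y, ((Ioc (0:ℝ) α).indicator (fun y => y) y +
        (1 / (1 - κ)) * (Ioi α).indicator
          (fun y => y - Real.sqrt (y ^ 2 - (1 - κ ^ 2) * α ^ 2)) y) ∂μ := by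
    apply MeasureTheory.integral_congr_ae
    exact ae_of_all _ step3
  rw [this, integral_add hint1 (hint2.const_mul _), MeasureTheory.integral_const_mul,
    MeasureTheory.integral_indicator measurableSet_Ioc, MeasureTheory.integral_indicator measurableSet_Ioi]
end

section
/- Let $V_w, V_o : [0,\infty)\to[0,\infty)$ be nondecreasing functions such that $\alpha \mapsto V_w(\alpha)+V_o(\alpha)$ is a strictly increasing bijection of $[0,\infty)$ onto itself, and suppose $G:[0,\infty)\to[0,\infty)$ satisfies $V_w(\alpha) = G(V_o(\alpha)+V_w(\alpha))$ for all $\alpha\ge 0$. Then $G$ is 1-Lipschitz: $|G(x)-G(y)| \le |x-y|$ for all $x,y\ge 0$. -/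
open Set

theorem displacement_characteristic_lipschitz
    (Vw Vo G : ℝ → ℝ)
    (hVw0 : ∀ α ∈ Ici (0:ℝ), 0 ≤ Vw α) (hVo0 : ∀ α ∈ Ici (0:ℝ), 0 ≤ Vo α)
    (hVwmono : MonotoneOn Vw (Ici 0)) (hVomono : MonotoneOn Vo (Ici 0))
    (hsum_mono : StrictMonoOn (fun α => Vw α + Vo α) (Ici 0))
    (hsum_bij : BijOn (fun α => Vw α + Vo α) (Ici 0) (Ici 0))
    (hG : ∀ α ∈ Ici (0:ℝ), Vw α = G (Vo α + Vw α)) :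
    ∀ x ∈ Ici (0:ℝ), ∀ y ∈ Ici (0:ℝ), |G x - G y| ≤ |x - y| := by
  have key : ∀ x ∈ Ici (0:ℝ), ∀ y ∈ Ici (0:ℝ), x ≤ y → G x ≤ G y ∧ G y - G x ≤ y - x := by
    intro x hx y hy hxy
    obtain ⟨α, hα, hαx⟩ := hsum_bij.surjOn hx
    obtain ⟨β, hβ, hβy⟩ := hsum_bij.surjOn hy
    simp only at hαx hβy
    have hab : α ≤ β := by
      by_contra h
      push_neg at h
      have := hsum_mono hβ hα h
      simp only at this
      linarith [hαx, hβy]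
    have hGx : G x = Vw α := by
      rw [← hαx, ← add_comm (Vo α) (Vw α), ← hG α hα]
    have hGy : G y = Vw β := by
      rw [← hβy, ← add_comm (Vo β) (Vw β), ← hG β hβ]
    have h1 := hVwmono hα hβ hab
    have h2 := hVomono hα hβ hab
    constructor
    · rw [hGx, hGy]; exact h1
    · rw [hGx, hGy, ← hαx, ← hβy]; linarith
  intro x hx y hy
  rcases le_total x y with h | h
  · obtain ⟨h1, h2⟩ := key x hx y hy h
    rw [abs_sub_comm, abs_of_nonneg (by linarith), abs_sub_comm, abs_of_nonneg (by linarith)]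
    linarith
  · obtain ⟨h1, h2⟩ := key y hy x hx h
    rw [abs_of_nonneg (by linarith), abs_of_nonneg (by linarith)]
    linarith
end

section
/- Let $0<\kappa<1$, $\alpha_{max}>0$, and define the operator $T$ on $L^{\infty}(0,\alpha_{max})$ by $(TV)(\alpha) = \kappa(1-\kappa^2)\alpha^4 \int_{\alpha}^{\alpha_{max}} \frac{V(y)}{y^2 (y^2-(1-\kappa^2)\alpha^2)^{3/2}}\,dy$. Then $T$ is a bounded linear operator with $\|TV\|_{L^\infty} \le \frac{1-\kappa}{1+\kappa}\|V\|_{L^\infty}$ for all $V \in L^\infty(0,\alpha_{max})$. -/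
open MeasureTheory intervalIntegral Set

lemma rpow_three_halves {q : ℝ} (hq : 0 < q) : q ^ ((3:ℝ)/2) = q * Real.sqrt q := by
  have : (3:ℝ)/2 = 1 + 1/2 := by norm_num
  rw [this, Real.rpow_add hq, Real.rpow_one, Real.sqrt_eq_rpow]

lemma deriv_F {c2 y : ℝ} (hc2 : 0 < c2) (hy : 0 < y) (hq : c2 < y ^ 2) :
    HasDerivAt (fun t => -(2 * t ^ 2 - c2) / (c2 ^ 2 * (t * Real.sqrt (t ^ 2 - c2))))
      (1 / (y ^ 2 * (y ^ 2 - c2) ^ ((3:ℝ)/2))) y := by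
  have hqpos : 0 < y ^ 2 - c2 := by linarith
  have hspos : 0 < Real.sqrt (y ^ 2 - c2) := Real.sqrt_pos.mpr hqpos
  have hsqrt : HasDerivAt (fun t => Real.sqrt (t ^ 2 - c2)) (1 / (2 * Real.sqrt (y ^ 2 - c2)) * (2 * y)) y :=
    (Real.hasDerivAt_sqrt (ne_of_gt hqpos)).comp y (by simpa using ((hasDerivAt_pow 2 y).sub_const c2))
  have hv : HasDerivAt (fun t => c2 ^ 2 * (t * Real.sqrt (t ^ 2 - c2)))
      (c2 ^ 2 * (1 * Real.sqrt (y ^ 2 - c2) + y * (1 / (2 * Real.sqrt (y ^ 2 - c2)) * (2 * y)))) y :=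
    (((hasDerivAt_id y).mul hsqrt)).const_mul _
  have hu : HasDerivAt (fun t => -(2 * t ^ 2 - c2)) (-(2 * (2 * y ^ 1))) y :=
    (((hasDerivAt_pow 2 y).const_mul 2).sub_const c2).neg
  have hv0 : c2 ^ 2 * (y * Real.sqrt (y ^ 2 - c2)) ≠ 0 := by positivity
  have key := hu.div hv hv0
  refine key.congr_deriv ?_
  symm
  rw [rpow_three_halves hqpos]
  set s := Real.sqrt (y ^ 2 - c2) with hsdef
  have hsq : s ^ 2 = y ^ 2 - c2 := Real.sq_sqrt hqpos.le
  clear_value s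
  rw [show y ^ 2 - c2 = s ^ 2 from hsq.symm]
  have hy' : y ≠ 0 := ne_of_gt hy
  have hc2' : c2 ≠ 0 := ne_of_gt hc2
  have hc2eq : c2 = y ^ 2 - s ^ 2 := by linarith
  have hs' : s ≠ 0 := ne_of_gt hspos
  have hd : y ^ 2 - s ^ 2 ≠ 0 := by rw [← hc2eq]; exact hc2'
  rw [hc2eq]
  field_simp
  ring

lemma kernel_contOn {c2 a b : ℝ} (ha : 0 < a) (hab : a ≤ b) (hq : c2 < a ^ 2) :
    ContinuousOn (fun y => 1 / (y ^ 2 * (y ^ 2 - c2) ^ ((3:ℝ)/2))) (uIcc a b) := by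
  rw [uIcc_of_le hab]
  intro y hy
  obtain ⟨hy1, hy2⟩ := hy
  have hy0 : 0 < y := lt_of_lt_of_le ha hy1
  have hq' : 0 < y ^ 2 - c2 := by nlinarith
  apply ContinuousWithinAt.div continuousWithinAt_const
  · exact (continuousWithinAt_id.pow 2).mul
      (((continuousWithinAt_id.pow 2).sub continuousWithinAt_const).rpow_const (Or.inl (ne_of_gt hq')))
  · have : 0 < (y ^ 2 - c2) ^ ((3:ℝ)/2) := Real.rpow_pos_of_pos hq' _
    positivity

lemma kernel_intble {c2 a b : ℝ} (ha : 0 < a) (hab : a ≤ b) (hq : c2 < a ^ 2) :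
    IntervalIntegrable (fun y => 1 / (y ^ 2 * (y ^ 2 - c2) ^ ((3:ℝ)/2))) volume a b :=
  (kernel_contOn ha hab hq).intervalIntegrable

lemma kernel_nonneg {c2 a b : ℝ} (ha : 0 < a) (hq : c2 < a ^ 2) {y : ℝ} (hy : y ∈ Icc a b) :
    0 ≤ 1 / (y ^ 2 * (y ^ 2 - c2) ^ ((3:ℝ)/2)) := by
  have hy0 : 0 < y := lt_of_lt_of_le ha hy.1
  have hq' : 0 < y ^ 2 - c2 := by nlinarith [hy.1]
  have : 0 < (y ^ 2 - c2) ^ ((3:ℝ)/2) := Real.rpow_pos_of_pos hq' _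
  positivity

lemma integral_bound {κ a b : ℝ} (hκ : 0 < κ) (hκ1 : κ < 1) (ha : 0 < a) (hab : a ≤ b) :
    κ * (1 - κ ^ 2) * a ^ 4 *
      ∫ y in a..b, 1 / (y ^ 2 * (y ^ 2 - (1 - κ ^ 2) * a ^ 2) ^ ((3:ℝ)/2)) ≤ (1 - κ) / (1 + κ) := by
  set c2 := (1 - κ ^ 2) * a ^ 2 with hc2def
  have hκ2 : 0 < 1 - κ ^ 2 := by nlinarith
  have hc2 : 0 < c2 := by positivity
  have hka : 0 < κ ^ 2 * a ^ 2 := by positivity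
  have hq : c2 < a ^ 2 := by rw [hc2def]; nlinarith
  have hderiv : ∀ y ∈ uIcc a b, HasDerivAt
      (fun t => -(2 * t ^ 2 - c2) / (c2 ^ 2 * (t * Real.sqrt (t ^ 2 - c2))))
      (1 / (y ^ 2 * (y ^ 2 - c2) ^ ((3:ℝ)/2))) y := by
    intro y hy
    rw [uIcc_of_le hab] at hy
    exact deriv_F hc2 (lt_of_lt_of_le ha hy.1) (by nlinarith [hy.1])
  have hint := integral_eq_sub_of_hasDerivAt hderiv (kernel_intble ha hab hq)
  rw [hint]
  have hsa : Real.sqrt (a ^ 2 - c2) = κ * a := by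
    rw [show a ^ 2 - c2 = (κ * a) ^ 2 by rw [hc2def]; ring]
    exact Real.sqrt_sq (by positivity)
  have hb0 : 0 < b := lt_of_lt_of_le ha hab
  have hqb : 0 < b ^ 2 - c2 := by nlinarith
  set d := Real.sqrt (b ^ 2 - c2) with hddef
  have hd : 0 < d := Real.sqrt_pos.mpr hqb
  have hd2 : d ^ 2 = b ^ 2 - c2 := Real.sq_sqrt hqb.le
  have hFb : 2 / c2 ^ 2 ≤ (2 * b ^ 2 - c2) / (c2 ^ 2 * (b * d)) := by
    rw [div_le_div_iff₀ (by positivity) (by positivity)]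
    nlinarith [sq_nonneg (b - d), sq_nonneg c2]
  have hFa : -(2 * a ^ 2 - c2) / (c2 ^ 2 * (a * Real.sqrt (a ^ 2 - c2))) = -((1 + κ ^ 2) / (κ * c2 ^ 2)) := by
    rw [hsa, hc2def]
    have h1 : κ ≠ 0 := ne_of_gt hκ
    have h2 : a ≠ 0 := ne_of_gt ha
    have h3 : (1 - κ ^ 2) ≠ 0 := ne_of_gt hκ2
    field_simp
    ring
  rw [hFa]
  have step : -(2 * b ^ 2 - c2) / (c2 ^ 2 * (b * d)) - -((1 + κ ^ 2) / (κ * c2 ^ 2)) ≤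
      (1 - κ) ^ 2 / (κ * c2 ^ 2) := by
    have heq : (1 + κ ^ 2) / (κ * c2 ^ 2) - 2 / c2 ^ 2 = (1 - κ) ^ 2 / (κ * c2 ^ 2) := by
      field_simp
      ring
    rw [neg_div]
    linarith [hFb, heq]
  have hcoef : 0 < κ * (1 - κ ^ 2) * a ^ 4 := by positivity
  calc κ * (1 - κ ^ 2) * a ^ 4 * (-(2 * b ^ 2 - c2) / (c2 ^ 2 * (b * d)) - -((1 + κ ^ 2) / (κ * c2 ^ 2)))
      ≤ κ * (1 - κ ^ 2) * a ^ 4 * ((1 - κ) ^ 2 / (κ * c2 ^ 2)) :=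
        mul_le_mul_of_nonneg_left step hcoef.le
    _ = (1 - κ) / (1 + κ) := by
        rw [hc2def]
        have h1 : κ ≠ 0 := ne_of_gt hκ
        have h2 : a ≠ 0 := ne_of_gt ha
        have h3 : (1 - κ ^ 2) ≠ 0 := ne_of_gt hκ2
        have h4 : (1 + κ) ≠ 0 := by positivity
        field_simp
        ring


theorem T_bounded_operator
    (κ αmax : ℝ) (hκ : 0 < κ) (hκ1 : κ < 1) (hαmax : 0 < αmax)
    (T : (ℝ → ℝ) → (ℝ → ℝ))
    (hT : ∀ V α, T V α = κ * (1 - κ ^ 2) * α ^ 4 *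
      ∫ y in α..αmax, V y / (y ^ 2 * (y ^ 2 - (1 - κ ^ 2) * α ^ 2) ^ ((3:ℝ)/2))) :
    -- linearity
    (∀ (V₁ V₂ : ℝ → ℝ) (c : ℝ) (α : ℝ),
      IntervalIntegrable (fun y => V₁ y / (y ^ 2 * (y ^ 2 - (1 - κ ^ 2) * α ^ 2) ^ ((3:ℝ)/2))) volume α αmax →
      IntervalIntegrable (fun y => V₂ y / (y ^ 2 * (y ^ 2 - (1 - κ ^ 2) * α ^ 2) ^ ((3:ℝ)/2))) volume α αmax →
      T (fun y => c * V₁ y + V₂ y) α = c * T V₁ α + T V₂ α) ∧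
    -- boundedness in L∞
    (∀ V : ℝ → ℝ,
      eLpNorm (T V) ⊤ (volume.restrict (Ioc 0 αmax)) ≤
        ENNReal.ofReal ((1 - κ) / (1 + κ)) * eLpNorm V ⊤ (volume.restrict (Ioc 0 αmax))) := by
  have hratio : 0 < (1 - κ) / (1 + κ) := by
    apply div_pos <;> linarith
  constructor
  · -- linearity
    intro V₁ V₂ c α h1 h2
    simp only [hT]
    have hfun : ∀ y : ℝ, (c * V₁ y + V₂ y) / (y ^ 2 * (y ^ 2 - (1 - κ ^ 2) * α ^ 2) ^ ((3:ℝ)/2)) =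
        c * (V₁ y / (y ^ 2 * (y ^ 2 - (1 - κ ^ 2) * α ^ 2) ^ ((3:ℝ)/2))) +
        V₂ y / (y ^ 2 * (y ^ 2 - (1 - κ ^ 2) * α ^ 2) ^ ((3:ℝ)/2)) := fun y => by ring
    simp_rw [hfun]
    rw [intervalIntegral.integral_add (h1.const_mul c) h2, intervalIntegral.integral_const_mul]
    ring
  · -- boundedness
    intro V
    set μ := volume.restrict (Ioc 0 αmax) with hμdef
    by_cases htop : eLpNorm V ⊤ μ = ⊤
    · rw [htop, ENNReal.mul_top (by simp [ENNReal.ofReal_eq_zero]; linarith)]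
      exact le_top
    · set M := (eLpNorm V ⊤ μ).toReal with hMdef
      have hM0 : 0 ≤ M := ENNReal.toReal_nonneg
      have hVbd : ∀ᵐ y ∂μ, ‖V y‖ ≤ M := by
        filter_upwards [ae_le_eLpNormEssSup (f := V) (μ := μ)] with y hy
        have h1 : ((‖V y‖₊ : ENNReal)).toReal ≤ M := by
          apply ENNReal.toReal_mono htop
          rwa [eLpNorm_exponent_top]
        simpa using h1
      have hVbd' : ∀ᵐ y ∂volume, y ∈ Ioc 0 αmax → ‖V y‖ ≤ M :=
        (ae_restrict_iff' measurableSet_Ioc).mp hVbd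
      have key : ∀ α ∈ Ioc 0 αmax, ‖T V α‖ ≤ (1 - κ) / (1 + κ) * M := by
        intro α hα
        obtain ⟨hα0, hα1⟩ := hα
        have hκ2 : 0 < 1 - κ ^ 2 := by nlinarith
        have hq : (1 - κ ^ 2) * α ^ 2 < α ^ 2 := by nlinarith [mul_pos (mul_pos hκ hκ) (mul_pos hα0 hα0)]
        rw [hT]
        by_cases hintV : IntervalIntegrable
            (fun y => V y / (y ^ 2 * (y ^ 2 - (1 - κ ^ 2) * α ^ 2) ^ ((3:ℝ)/2))) volume α αmax
        · have hg := kernel_intble (c2 := (1 - κ ^ 2) * α ^ 2) hα0 hα1 hq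
          have hgM : IntervalIntegrable
              (fun y => M * (1 / (y ^ 2 * (y ^ 2 - (1 - κ ^ 2) * α ^ 2) ^ ((3:ℝ)/2)))) volume α αmax :=
            hg.const_mul M
          have hptwise : ∀ᵐ t ∂(volume.restrict (Set.uIoc α αmax)),
              ‖V t / (t ^ 2 * (t ^ 2 - (1 - κ ^ 2) * α ^ 2) ^ ((3:ℝ)/2))‖ ≤
              M * (1 / (t ^ 2 * (t ^ 2 - (1 - κ ^ 2) * α ^ 2) ^ ((3:ℝ)/2))) := by
            rw [ae_restrict_iff' measurableSet_uIoc]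
            filter_upwards [hVbd'] with y hy hymem
            rw [uIoc_of_le hα1] at hymem
            have hy0 : 0 < y := lt_trans hα0 hymem.1
            have hbV : ‖V y‖ ≤ M := hy ⟨hy0, hymem.2⟩
            have hqy : 0 < y ^ 2 - (1 - κ ^ 2) * α ^ 2 := by nlinarith [hymem.1]
            have hDpos : 0 < y ^ 2 * (y ^ 2 - (1 - κ ^ 2) * α ^ 2) ^ ((3:ℝ)/2) := by
              have := Real.rpow_pos_of_pos hqy ((3:ℝ)/2)
              positivity
            rw [norm_div, Real.norm_of_nonneg hDpos.le, mul_one_div]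
            gcongr
          have hnorm := intervalIntegral.norm_integral_le_abs_of_norm_le hptwise hgM
          have hIgnn : 0 ≤ ∫ y in α..αmax, 1 / (y ^ 2 * (y ^ 2 - (1 - κ ^ 2) * α ^ 2) ^ ((3:ℝ)/2)) :=
            intervalIntegral.integral_nonneg hα1 (fun y hy => kernel_nonneg hα0 hq hy)
          have hIM : (∫ y in α..αmax, M * (1 / (y ^ 2 * (y ^ 2 - (1 - κ ^ 2) * α ^ 2) ^ ((3:ℝ)/2)))) =
              M * ∫ y in α..αmax, 1 / (y ^ 2 * (y ^ 2 - (1 - κ ^ 2) * α ^ 2) ^ ((3:ℝ)/2)) :=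
            intervalIntegral.integral_const_mul M _
          rw [hIM] at hnorm
          rw [abs_of_nonneg (mul_nonneg hM0 hIgnn)] at hnorm
          have hcoef : 0 < κ * (1 - κ ^ 2) * α ^ 4 := by positivity
          calc ‖κ * (1 - κ ^ 2) * α ^ 4 *
                ∫ y in α..αmax, V y / (y ^ 2 * (y ^ 2 - (1 - κ ^ 2) * α ^ 2) ^ ((3:ℝ)/2))‖
              = κ * (1 - κ ^ 2) * α ^ 4 *
                ‖∫ y in α..αmax, V y / (y ^ 2 * (y ^ 2 - (1 - κ ^ 2) * α ^ 2) ^ ((3:ℝ)/2))‖ := by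
                rw [norm_mul, Real.norm_of_nonneg hcoef.le]
            _ ≤ κ * (1 - κ ^ 2) * α ^ 4 *
                (M * ∫ y in α..αmax, 1 / (y ^ 2 * (y ^ 2 - (1 - κ ^ 2) * α ^ 2) ^ ((3:ℝ)/2))) :=
                mul_le_mul_of_nonneg_left hnorm hcoef.le
            _ = M * (κ * (1 - κ ^ 2) * α ^ 4 *
                ∫ y in α..αmax, 1 / (y ^ 2 * (y ^ 2 - (1 - κ ^ 2) * α ^ 2) ^ ((3:ℝ)/2))) := by ring
            _ ≤ M * ((1 - κ) / (1 + κ)) :=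
                mul_le_mul_of_nonneg_left (integral_bound hκ hκ1 hα0 hα1) hM0
            _ = (1 - κ) / (1 + κ) * M := by ring
        · rw [intervalIntegral.integral_undef hintV, mul_zero, norm_zero]
          positivity
      have hle : eLpNorm (T V) ⊤ μ ≤ ENNReal.ofReal ((1 - κ) / (1 + κ) * M) := by
        rw [eLpNorm_exponent_top]
        apply eLpNormEssSup_le_of_ae_bound
        rw [hμdef]
        exact (ae_restrict_iff' measurableSet_Ioc).mpr (ae_of_all _ fun α hα => key α hα)
      refine hle.trans ?_
      rw [ENNReal.ofReal_mul hratio.le, hMdef, ENNReal.ofReal_toReal htop]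
end

section
/- Let $0<\kappa<1$, $\alpha_{max}>0$, $V_{max}>0$, and for a function $G$ define $h_G(\alpha) = \frac{\kappa}{1-\kappa^2}(\alpha_{max}-R(\alpha))\left(2G(V_{max}) + \frac{1+\kappa}{\kappa}(V_{max}-G(V_{max}))\right) + \frac{\kappa}{1-\kappa^2}\cdot\frac{(\alpha_{max}-R(\alpha))^2}{\alpha_{max}R(\alpha)}\,G(V_{max})$, where $R(\alpha)=\sqrt{\alpha_{max}^2-(1-\kappa^2)\alpha^2}$. If $|G_1(V_{max}) - G_2(V_{max})| \le \delta$, then $\|h_{G_1} - h_{G_2}\|_{L^\infty(0,\alpha_{max})} \le \left(\alpha_{max} + \frac{2}{1+\kappa}\right)\delta$. -/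
open Set

theorem h_stability
    (κ αmax Vmax δ : ℝ) (hκ : 0 < κ) (hκ1 : κ < 1) (hαmax : 0 < αmax)
    (hVmax : 0 < Vmax) (hδ : 0 ≤ δ)
    (R : ℝ → ℝ)
    (hR : ∀ α, R α = Real.sqrt (αmax ^ 2 - (1 - κ ^ 2) * α ^ 2))
    (G₁ G₂ : ℝ → ℝ)
    (hGδ : |G₁ Vmax - G₂ Vmax| ≤ δ)
    (h : (ℝ → ℝ) → ℝ → ℝ)
    (hh : ∀ (G : ℝ → ℝ) (α : ℝ), h G α =
      κ / (1 - κ ^ 2) * (αmax - R α) *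
        (2 * G Vmax + (1 + κ) / κ * (Vmax - G Vmax)) +
      κ / (1 - κ ^ 2) * ((αmax - R α) ^ 2 / (αmax * R α)) * G Vmax) :
    ∀ α ∈ Icc (0:ℝ) αmax, |h G₁ α - h G₂ α| ≤ (αmax + 2 / (1 + κ)) * δ := by
  intro α hα
  obtain ⟨hα0, hα1⟩ := hα
  have hκ2 : 0 < 1 - κ ^ 2 := by nlinarith
  have hκ0 : 0 < 1 + κ := by linarith
  have hRge : κ * αmax ≤ R α := by
    rw [hR α]
    calc κ * αmax = Real.sqrt ((κ * αmax) ^ 2) := (Real.sqrt_sq (by positivity)).symm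
      _ ≤ Real.sqrt (αmax ^ 2 - (1 - κ ^ 2) * α ^ 2) := Real.sqrt_le_sqrt (by nlinarith [mul_self_le_mul_self hα0 hα1])
  have hRle : R α ≤ αmax := by
    rw [hR α]
    calc Real.sqrt (αmax ^ 2 - (1 - κ ^ 2) * α ^ 2) ≤ Real.sqrt (αmax ^ 2) :=
          Real.sqrt_le_sqrt (by nlinarith)
      _ = αmax := Real.sqrt_sq hαmax.le
  have hR0 : 0 < R α := lt_of_lt_of_le (by positivity) hRge
  set s := αmax - R α with hs
  have hs0 : 0 ≤ s := by simp [hs]; linarith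
  have hsle : s ≤ (1 - κ) * αmax := by simp [hs]; nlinarith
  set C := -(s / (1 + κ)) + κ / (1 - κ ^ 2) * (s ^ 2 / (αmax * R α)) with hC
  have key : h G₁ α - h G₂ α = C * (G₁ Vmax - G₂ Vmax) := by
    rw [hh G₁ α, hh G₂ α, hC, hs]
    field_simp
    ring
  have ht1 : |(-(s / (1 + κ)))| ≤ αmax := by
    rw [abs_neg, abs_of_nonneg (by positivity)]
    rw [div_le_iff₀ hκ0]
    nlinarith
  have ht2nn : 0 ≤ κ / (1 - κ ^ 2) * (s ^ 2 / (αmax * R α)) := by positivity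
  have ht2 : κ / (1 - κ ^ 2) * (s ^ 2 / (αmax * R α)) ≤ 2 / (1 + κ) := by
    have h1 : s ^ 2 / (αmax * R α) ≤ (1 - κ) ^ 2 * αmax ^ 2 / (κ * αmax ^ 2) := by
      apply div_le_div₀ (by positivity) (by nlinarith) (by positivity) (by nlinarith)
    have h2 : κ / (1 - κ ^ 2) * ((1 - κ) ^ 2 * αmax ^ 2 / (κ * αmax ^ 2)) = (1 - κ) / (1 + κ) := by
      field_simp
      ring
    calc κ / (1 - κ ^ 2) * (s ^ 2 / (αmax * R α))
        ≤ κ / (1 - κ ^ 2) * ((1 - κ) ^ 2 * αmax ^ 2 / (κ * αmax ^ 2)) := by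
          apply mul_le_mul_of_nonneg_left h1 (by positivity)
      _ = (1 - κ) / (1 + κ) := h2
      _ ≤ 2 / (1 + κ) := by rw [div_le_div_iff₀ hκ0 hκ0]; nlinarith
  have hCabs : |C| ≤ αmax + 2 / (1 + κ) := by
    calc |C| ≤ |(-(s / (1 + κ)))| + |κ / (1 - κ ^ 2) * (s ^ 2 / (αmax * R α))| := abs_add_le _ _
      _ ≤ αmax + 2 / (1 + κ) := by
          rw [abs_of_nonneg ht2nn]; exact add_le_add ht1 ht2
  calc |h G₁ α - h G₂ α| = |C| * |G₁ Vmax - G₂ Vmax| := by rw [key, abs_mul]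
    _ ≤ (αmax + 2 / (1 + κ)) * δ :=
        mul_le_mul hCabs hGδ (abs_nonneg _) (by positivity)
end
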